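/- arXiv:math/0309176 — 2 statements merged into one kernel-verified Lean document; each statement's English description precedes it below -/
import Mathlib

section
/- Let a : X × ℝ₊ → ℝ be continuous with asymptotic expansion a(x,t) ~ Σ_{j=n-1}^{-∞} a_j(x) t^j as t → ∞ (uniformly in x on a compact space X with finite measure), and define S(ρ) = ∫_X ∫_0^∞ e^{-tρ} a(x,t) dt dμ(x) for ρ > 0. Then S(ρ) admits an asymptotic expansion S(ρ) = Σ_{j=0}^{n-1} b_j ρ^{j-n} + b log ρ + O(1) as ρ → 0⁺, where b_j = (n-1-j)! ∫_X a_{n-1-j} dμ and b = -∫_X a_{-1} dμ. -/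
open Real Set MeasureTheory

lemma aux_intOn_exp_pow {ρ : ℝ} (hρ : 0 < ρ) (k : ℕ) :
    IntegrableOn (fun t : ℝ => Real.exp (-t * ρ) * t ^ k) (Ioi (0:ℝ)) := by
  have h := integrableOn_rpow_mul_exp_neg_mul_rpow (s := (k:ℝ)) (p := 1)
    (by exact_mod_cast neg_one_lt_zero.trans_le (Nat.cast_nonneg k)) zero_lt_one hρ
  refine h.congr_fun (fun t ht => ?_) measurableSet_Ioi
  beta_reduce; rw [rpow_one, rpow_natCast]; ring_nf

lemma aux_integral_exp_pow {ρ : ℝ} (hρ : 0 < ρ) (k : ℕ) :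
    ∫ t in Ioi (0:ℝ), Real.exp (-t * ρ) * t ^ k
      = (Nat.factorial k : ℝ) * ρ ^ (-(k:ℤ) - 1) := by
  have h := Real.integral_rpow_mul_exp_neg_mul_Ioi (a := (k:ℝ) + 1) (r := ρ)
    (by positivity) hρ
  rw [show ((k:ℝ) + 1) - 1 = (k:ℝ) by ring] at h
  have e1 : ∫ t in Ioi (0:ℝ), Real.exp (-t * ρ) * t ^ k
      = ∫ t in Ioi (0:ℝ), t ^ (k:ℝ) * Real.exp (-(ρ * t)) := by
    refine setIntegral_congr_fun measurableSet_Ioi (fun t ht => ?_)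
    rw [rpow_natCast]; ring_nf
  rw [e1, h, show (k:ℝ) + 1 = ((k:ℕ):ℝ) + 1 by norm_num, Real.Gamma_nat_eq_factorial]
  have e2 : (1/ρ) ^ ((k:ℝ)+1) = ρ ^ ((-(k:ℤ)-1 : ℤ) : ℝ) := by
    rw [one_div, ← rpow_neg_one ρ, ← rpow_mul hρ.le]
    congr 1; push_cast; ring
  rw [e2, rpow_intCast]; ring

lemma aux_intOn_exp_zpow {ρ T : ℝ} (hρ : 0 < ρ) (hT : 0 < T) {j : ℤ} (hj : -1 ≤ j) :
    IntegrableOn (fun t : ℝ => Real.exp (-t * ρ) * t ^ j) (Ioi T) := by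
  rcases eq_or_lt_of_le hj with h | h
  · subst h
    have hg : IntegrableOn (fun t : ℝ => T⁻¹ * Real.exp (-ρ * t)) (Ioi T) :=
      (exp_neg_integrableOn_Ioi T hρ).const_mul _
    refine hg.mono' ?_ ?_
    · simp only [zpow_neg_one]
      exact (((Real.continuous_exp.comp (continuous_id.neg.mul continuous_const)).measurable.mul
        measurable_inv)).aestronglyMeasurable.restrict
    · rw [ae_restrict_iff' measurableSet_Ioi]
      filter_upwards with t ht
      have h1 : 0 < t := hT.trans ht
      rw [Real.norm_eq_abs, abs_mul, abs_of_pos (Real.exp_pos _), zpow_neg_one,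
        abs_of_pos (inv_pos.2 h1), mul_comm (T⁻¹), show (-ρ*t) = -t*ρ by ring]
      gcongr
      exact le_of_lt ht
  · obtain ⟨k, rfl⟩ := Int.eq_ofNat_of_zero_le (by omega : 0 ≤ j)
    refine ((aux_intOn_exp_pow hρ k).mono_set (Ioi_subset_Ioi hT.le)).congr_fun
      (fun t ht => by rw [zpow_natCast]) measurableSet_Ioi

lemma aux_pow_tail {T ρ : ℝ} (hT : 0 < T) (hρ : 0 < ρ) (k : ℕ) :
    |(∫ t in Ioi T, Real.exp (-t * ρ) * t ^ k) - (Nat.factorial k : ℝ) * ρ ^ (-(k:ℤ) - 1)|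
      ≤ (max 1 T) ^ k * T := by
  have h0 : ∫ t in Ioi (0:ℝ), Real.exp (-t * ρ) * t ^ k
      = (Nat.factorial k : ℝ) * ρ ^ (-(k:ℤ) - 1) := aux_integral_exp_pow hρ k
  have hsplit : (∫ t in Ioc (0:ℝ) T, Real.exp (-t * ρ) * t ^ k)
      + (∫ t in Ioi T, Real.exp (-t * ρ) * t ^ k)
      = ∫ t in Ioi (0:ℝ), Real.exp (-t * ρ) * t ^ k := by
    rw [← setIntegral_union (Ioc_disjoint_Ioi le_rfl) measurableSet_Ioi
      ((aux_intOn_exp_pow hρ k).mono_set Ioc_subset_Ioi_self)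
      ((aux_intOn_exp_pow hρ k).mono_set (Ioi_subset_Ioi hT.le)),
      Ioc_union_Ioi_eq_Ioi hT.le]
  have hb : |∫ t in Ioc (0:ℝ) T, Real.exp (-t * ρ) * t ^ k| ≤ (max 1 T) ^ k * T := by
    have := norm_setIntegral_le_of_norm_le_const (μ := volume) (s := Ioc (0:ℝ) T)
      (C := (max 1 T) ^ k) (f := fun t => Real.exp (-t * ρ) * t ^ k)
      measure_Ioc_lt_top ?_
    · rwa [Real.volume_real_Ioc_of_le hT.le, sub_zero, Real.norm_eq_abs] at this
    · intro t ht
      rw [Real.norm_eq_abs, abs_mul, abs_of_pos (Real.exp_pos _), abs_of_nonneg (pow_nonneg ht.1.le _)]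
      have hh1 : Real.exp (-t * ρ) ≤ 1 :=
        Real.exp_le_one_iff.2 (by nlinarith [ht.1.le, hρ.le])
      have hh2 : t ^ k ≤ (max 1 T) ^ k :=
        pow_le_pow_left₀ ht.1.le (ht.2.trans (le_max_right 1 T)) k
      calc Real.exp (-t * ρ) * t ^ k ≤ 1 * (max 1 T) ^ k :=
            mul_le_mul hh1 hh2 (pow_nonneg ht.1.le _) zero_le_one
        _ = (max 1 T) ^ k := one_mul _
  rw [show (∫ t in Ioi T, Real.exp (-t * ρ) * t ^ k) - (Nat.factorial k : ℝ) * ρ ^ (-(k:ℤ) - 1)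
      = -(∫ t in Ioc (0:ℝ) T, Real.exp (-t * ρ) * t ^ k) by rw [← h0, ← hsplit]; ring]
  rwa [abs_neg]

lemma aux_sq_le_exp {u : ℝ} (hu : 0 ≤ u) : u ^ 2 ≤ 4 * Real.exp u := by
  have h := Real.add_one_le_exp (u / 2)
  have heq : Real.exp u = Real.exp (u / 2) * Real.exp (u / 2) := by
    rw [← Real.exp_add]; norm_num
  nlinarith [mul_self_le_mul_self (by linarith : (0:ℝ) ≤ u / 2 + 1) h]

lemma aux_log_tail {T ρ : ℝ} (hT : 0 < T) (hρ : 0 < ρ) (hρT : ρ * T < 1) :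
    |(∫ t in Ioi T, Real.exp (-t * ρ) * t ^ (-1:ℤ)) - (-Real.log ρ)|
      ≤ 3 + |Real.log T| := by
  set f : ℝ → ℝ := fun t => Real.exp (-t * ρ) * t ^ (-1:ℤ) with hf
  set B : ℝ := ρ⁻¹ with hBdef
  have hB0 : 0 < B := inv_pos.2 hρ
  have hTB : T < B := by
    have h1 : ρ * B = 1 := mul_inv_cancel₀ hρ.ne'
    nlinarith
  have hI : IntegrableOn f (Ioi T) := aux_intOn_exp_zpow hρ hT le_rfl
  have hI1 : IntegrableOn f (Ioc T B) := hI.mono_set Ioc_subset_Ioi_self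
  have hI2 : IntegrableOn f (Ioi B) := hI.mono_set (Ioi_subset_Ioi hTB.le)
  have hsplit : (∫ t in Ioc T B, f t) + (∫ t in Ioi B, f t) = ∫ t in Ioi T, f t := by
    rw [← setIntegral_union (Ioc_disjoint_Ioi le_rfl) measurableSet_Ioi hI1 hI2,
      Ioc_union_Ioi_eq_Ioi hTB.le]
  -- part 1
  have hinv : IntegrableOn (fun t : ℝ => t⁻¹) (Ioc T B) :=
    (intervalIntegral.intervalIntegrable_inv (f := fun x => x)
      (fun x hx => (hT.trans_le ((uIcc_of_le hTB.le ▸ hx).1)).ne') continuousOn_id).1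
  have hIlog : ∫ t in Ioc T B, (t:ℝ)⁻¹ = -Real.log ρ - Real.log T := by
    rw [← intervalIntegral.integral_of_le hTB.le, integral_inv_of_pos hT hB0,
      Real.log_div hB0.ne' hT.ne', hBdef, Real.log_inv]
  have hdiffint : IntegrableOn (fun t : ℝ => f t - t⁻¹) (Ioc T B) := hI1.sub hinv
  have hpart1 : |∫ t in Ioc T B, (f t - t⁻¹)| ≤ 1 := by
    have hb := norm_setIntegral_le_of_norm_le_const (μ := volume) (s := Ioc T B)
      (C := ρ) (f := fun t => f t - t⁻¹) measure_Ioc_lt_top ?_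
    · rw [Real.norm_eq_abs] at hb
      refine hb.trans ?_
      rw [Real.volume_real_Ioc_of_le hTB.le]
      calc ρ * (B - T) ≤ ρ * B := by nlinarith
        _ = 1 := mul_inv_cancel₀ hρ.ne'
    · intro t ht
      have ht0 : 0 < t := hT.trans ht.1
      have he1 : Real.exp (-t * ρ) ≤ 1 :=
        Real.exp_le_one_iff.2 (by nlinarith [ht0.le, hρ.le])
      have he2 : 1 - Real.exp (-t * ρ) ≤ t * ρ := by
        nlinarith [Real.add_one_le_exp (-t * ρ)]
      have : f t - t⁻¹ = (Real.exp (-t * ρ) - 1) * t⁻¹ := by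
        rw [hf]; simp [zpow_neg_one]; ring
      rw [Real.norm_eq_abs, this, abs_mul, abs_of_pos (inv_pos.2 ht0),
        abs_of_nonpos (by linarith), neg_sub]
      calc (1 - Real.exp (-t * ρ)) * t⁻¹ ≤ (t * ρ) * t⁻¹ :=
            mul_le_mul_of_nonneg_right he2 (inv_pos.2 ht0).le
        _ = ρ := by field_simp
  -- part 2
  have hg2 : IntegrableOn (fun t : ℝ => 4 * ρ⁻¹ ^ 2 * t ^ (-3:ℝ)) (Ioi B) :=
    (integrableOn_Ioi_rpow_of_lt (by norm_num) hB0).const_mul _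
  have hpt2 : ∀ t ∈ Ioi B, f t ≤ 4 * ρ⁻¹ ^ 2 * t ^ (-3:ℝ) := by
    intro t ht
    have ht0 : 0 < t := hB0.trans ht
    have hu : 0 < t * ρ := mul_pos ht0 hρ
    have key : Real.exp (-(t * ρ)) * (t * ρ) ^ 2 ≤ 4 := by
      rw [Real.exp_neg]
      have h4 := aux_sq_le_exp hu.le
      rw [inv_mul_le_iff₀ (Real.exp_pos _)]
      linarith
    have h3 : t ^ (-3:ℝ) = (t ^ 3)⁻¹ := by
      rw [show (-3:ℝ) = -((3:ℕ):ℝ) by norm_num, Real.rpow_neg ht0.le, Real.rpow_natCast]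
    rw [h3]
    show Real.exp (-t * ρ) * t ^ (-1:ℤ) ≤ _
    have heqn : Real.exp (-t * ρ) * t ^ (-1:ℤ)
        = (Real.exp (-(t * ρ)) * (t * ρ) ^ 2) * (ρ⁻¹ ^ 2 * (t ^ 3)⁻¹) := by
      rw [zpow_neg_one, neg_mul]
      field_simp
    rw [heqn]
    calc (Real.exp (-(t * ρ)) * (t * ρ) ^ 2) * (ρ⁻¹ ^ 2 * (t ^ 3)⁻¹)
        ≤ 4 * (ρ⁻¹ ^ 2 * (t ^ 3)⁻¹) := by
          refine mul_le_mul_of_nonneg_right key (by positivity)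
      _ = 4 * ρ⁻¹ ^ 2 * (t ^ 3)⁻¹ := by ring
  have hpart2a : (0:ℝ) ≤ ∫ t in Ioi B, f t := by
    refine setIntegral_nonneg measurableSet_Ioi (fun t ht => ?_)
    have ht0 : 0 < t := hB0.trans ht
    rw [hf]
    positivity
  have hpart2b : (∫ t in Ioi B, f t) ≤ 2 := by
    have hmono := setIntegral_mono_on hI2 hg2 measurableSet_Ioi hpt2
    have hval : ∫ t in Ioi B, 4 * ρ⁻¹ ^ 2 * t ^ (-3:ℝ) = 2 := by
      rw [integral_const_mul, integral_Ioi_rpow_of_lt (by norm_num) hB0]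
      rw [show (-3:ℝ) + 1 = -((2:ℕ):ℝ) by norm_num, Real.rpow_neg hB0.le, Real.rpow_natCast]
      rw [hBdef]
      field_simp
      ring
    linarith
  -- combine
  have hEq : (∫ t in Ioc T B, f t) = (-Real.log ρ - Real.log T) + ∫ t in Ioc T B, (f t - t⁻¹) := by
    rw [← hIlog, ← integral_add hinv hdiffint]
    congr 1; funext t; ring
  have habs : ∀ y : ℝ, |y| ≤ 1 → ∀ z : ℝ, 0 ≤ z → z ≤ 2 →
      |((-Real.log ρ - Real.log T) + y + z) - (-Real.log ρ)| ≤ 3 + |Real.log T| := by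
    intro y hy z hz1 hz2
    have := abs_le.1 hy
    rw [abs_le]
    constructor <;> nlinarith [neg_abs_le (Real.log T), le_abs_self (Real.log T)]
  rw [← hsplit, hEq]
  exact habs _ hpart1 _ hpart2a hpart2b

lemma aux_meas_zpow (j : ℤ) : Measurable fun t : ℝ => t ^ j := by
  cases j with
  | ofNat k => simpa [zpow_natCast] using (measurable_id.pow_const k)
  | negSucc k =>
    simp only [zpow_negSucc]
    exact (measurable_id.pow_const (k+1)).inv

/-- Laplace transform of a classical symbol: if `a(x,t) ~ Σ_{j=n-1}^{-∞} a_j(x) t^j`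
uniformly in `x` on a finite measure space, then
`S(ρ) = ∫_X ∫_0^∞ e^{-tρ} a(x,t) dt dμ(x)` has the expansion
`Σ_{j=0}^{n-1} b_j ρ^{j-n} + b log ρ + O(1)` as `ρ → 0⁺`, with
`b_j = (n-1-j)! ∫_X a_{n-1-j} dμ` and `b = -∫_X a_{-1} dμ`. -/
theorem stmt_3 {X : Type*} [TopologicalSpace X] [CompactSpace X] [MeasurableSpace X] (μ : Measure X) [IsFiniteMeasure μ]
    (n : ℕ) (hn : 1 ≤ n) (a : X → ℝ → ℝ) (c : ℤ → X → ℝ)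
    (ha : Continuous (Function.uncurry a))
    (hc : ∀ j : ℤ, Integrable (c j) μ)
    (hmeas : ∀ j : ℤ, Measurable (c j))
    (hexp : ∀ N : ℕ, ∃ C T : ℝ, 0 < T ∧ ∀ x : X, ∀ t : ℝ, T ≤ t →
      |a x t - ∑ j ∈ Finset.Icc (-(N:ℤ)) ((n:ℤ) - 1), c j x * t ^ j|
        ≤ C * t ^ (-(N:ℝ) - 1))
    (hint : ∀ ρ : ℝ, 0 < ρ →
      Integrable (fun p : X × ℝ => Real.exp (-p.2 * ρ) * a p.1 p.2)
        (μ.prod (volume.restrict (Ioi (0:ℝ))))) :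
    ∃ δ M : ℝ, 0 < δ ∧ ∀ ρ ∈ Ioo (0:ℝ) δ,
      |(∫ x, (∫ t in Ioi (0:ℝ), Real.exp (-t * ρ) * a x t) ∂μ)
        - ((∑ j ∈ Finset.range n,
            ((Nat.factorial (n - 1 - j) : ℝ) * ∫ x, c ((n:ℤ) - 1 - j) x ∂μ)
              * ρ ^ ((j : ℤ) - n))
          + (-(∫ x, c (-1) x ∂μ)) * Real.log ρ)| ≤ M := by
  classical
  obtain ⟨C₀, T, hT, hb0⟩ := hexp 1
  set C : ℝ := max C₀ 0 with hCdef
  have hC0 : (0:ℝ) ≤ C := le_max_right _ _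
  have hb : ∀ x : X, ∀ t : ℝ, T ≤ t →
      |a x t - ∑ j ∈ Finset.Icc (-1:ℤ) ((n:ℤ) - 1), c j x * t ^ j|
        ≤ C * t ^ (-(1:ℝ) - 1) := by
    intro x t ht
    have h := hb0 x t ht
    simp only [Nat.cast_one] at h
    refine h.trans (mul_le_mul_of_nonneg_right (le_max_left _ _) ?_)
    exact Real.rpow_nonneg (le_trans hT.le ht) _
  obtain ⟨Ma₀, hMa₀⟩ := (isCompact_univ.prod isCompact_Icc :
      IsCompact ((univ : Set X) ×ˢ Icc (0:ℝ) T)).exists_bound_of_continuousOn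
      ha.continuousOn
  set Ma : ℝ := max Ma₀ 0 with hMadef
  have hMa0 : (0:ℝ) ≤ Ma := le_max_right _ _
  have hMa : ∀ x : X, ∀ t ∈ Icc (0:ℝ) T, |a x t| ≤ Ma := by
    intro x t ht
    have := hMa₀ (x, t) (by simp [ht])
    rw [Real.norm_eq_abs] at this
    exact this.trans (le_max_left _ _)
  set K1 : ℝ := Ma * T + C * T⁻¹ with hK1def
  set Kbig : ℝ := (max 1 T) ^ n * T + (3 + |Real.log T|) with hKbigdef
  refine ⟨T⁻¹, K1 * (μ univ).toReal
    + ∑ j ∈ Finset.Icc (-1:ℤ) ((n:ℤ) - 1), |∫ x, c j x ∂μ| * Kbig,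
    inv_pos.2 hT, ?_⟩
  rintro ρ ⟨hρ, hρδ⟩
  have hρT : ρ * T < 1 := by
    have h1 := mul_lt_mul_of_pos_right hρδ hT
    rwa [inv_mul_cancel₀ hT.ne'] at h1
  set I : ℤ → ℝ := fun j => ∫ t in Ioi T, Real.exp (-t * ρ) * t ^ j with hIdef
  set J : ℤ → ℝ := fun j => if j = -1 then -Real.log ρ
    else (Nat.factorial j.toNat : ℝ) * ρ ^ (-j - 1) with hJdef
  -- pointwise in x decomposition
  have hcontx : ∀ x : X, Continuous fun t : ℝ => Real.exp (-t * ρ) * a x t := by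
    intro x
    exact (Real.continuous_exp.comp (continuous_id.neg.mul continuous_const)).mul
      (ha.comp (continuous_const.prodMk continuous_id))
  have hsum_int : ∀ x : X, IntegrableOn
      (fun t : ℝ => ∑ j ∈ Finset.Icc (-1:ℤ) ((n:ℤ) - 1), c j x * (Real.exp (-t * ρ) * t ^ j))
      (Ioi T) := by
    intro x
    exact integrable_finset_sum _ (fun j hj =>
      ((aux_intOn_exp_zpow hρ hT (Finset.mem_Icc.1 hj).1).const_mul _))
  have hrem_int : ∀ x : X, IntegrableOn
      (fun t : ℝ => Real.exp (-t * ρ) *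
        (a x t - ∑ j ∈ Finset.Icc (-1:ℤ) ((n:ℤ) - 1), c j x * t ^ j)) (Ioi T) := by
    intro x
    refine ((integrableOn_Ioi_rpow_of_lt (by norm_num : (-(1:ℝ) - 1) < -1) hT).const_mul
      C).mono' ?_ ?_
    · refine (((Real.continuous_exp.comp
        (continuous_id.neg.mul continuous_const)).measurable.mul ?_)).aestronglyMeasurable.restrict
      refine ((ha.comp (continuous_const.prodMk continuous_id)).measurable.sub ?_)
      exact Finset.measurable_sum _ (fun j _ => (measurable_const.mul (aux_meas_zpow j)))
    · rw [ae_restrict_iff' measurableSet_Ioi]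
      filter_upwards with t ht
      have ht0 : 0 < t := hT.trans ht
      rw [Real.norm_eq_abs, abs_mul, abs_of_pos (Real.exp_pos _)]
      have he1 : Real.exp (-t * ρ) ≤ 1 :=
        Real.exp_le_one_iff.2 (by nlinarith [ht0.le, hρ.le])
      calc Real.exp (-t * ρ) * |a x t - ∑ j ∈ Finset.Icc (-1:ℤ) ((n:ℤ) - 1), c j x * t ^ j|
          ≤ 1 * (C * t ^ (-(1:ℝ) - 1)) :=
            mul_le_mul he1 (hb x t ht.le) (abs_nonneg _)
              (by positivity)
        _ = C * t ^ (-(1:ℝ) - 1) := one_mul _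
  have htail_int : ∀ x : X, IntegrableOn (fun t : ℝ => Real.exp (-t * ρ) * a x t) (Ioi T) := by
    intro x
    refine MeasureTheory.IntegrableOn.congr_fun ((hsum_int x).add (hrem_int x))
      (fun t ht => ?_) measurableSet_Ioi
    simp only [Pi.add_apply]
    rw [Finset.sum_congr rfl (fun j (_ : j ∈ Finset.Icc (-1:ℤ) ((n:ℤ) - 1)) =>
      (by ring : c j x * (Real.exp (-t * ρ) * t ^ j) = Real.exp (-t * ρ) * (c j x * t ^ j))),
      ← Finset.mul_sum]
    ring
  have hIoc_int : ∀ x : X, IntegrableOn (fun t : ℝ => Real.exp (-t * ρ) * a x t) (Ioc 0 T) :=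
    fun x => ((hcontx x).integrableOn_Icc).mono_set Ioc_subset_Icc_self
  have hFx : ∀ x : X, (∫ t in Ioi (0:ℝ), Real.exp (-t * ρ) * a x t)
      = ((∫ t in Ioc (0:ℝ) T, Real.exp (-t * ρ) * a x t)
        + (∫ t in Ioi T, Real.exp (-t * ρ) *
            (a x t - ∑ j ∈ Finset.Icc (-1:ℤ) ((n:ℤ) - 1), c j x * t ^ j)))
        + ∑ j ∈ Finset.Icc (-1:ℤ) ((n:ℤ) - 1), c j x * I j := by
    intro x
    have hsplit : (∫ t in Ioc (0:ℝ) T, Real.exp (-t * ρ) * a x t)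
        + (∫ t in Ioi T, Real.exp (-t * ρ) * a x t)
        = ∫ t in Ioi (0:ℝ), Real.exp (-t * ρ) * a x t := by
      rw [← setIntegral_union (Ioc_disjoint_Ioi le_rfl) measurableSet_Ioi (hIoc_int x)
        (htail_int x), Ioc_union_Ioi_eq_Ioi hT.le]
    have h2 : (∫ t in Ioi T, Real.exp (-t * ρ) * a x t)
        = (∫ t in Ioi T, ∑ j ∈ Finset.Icc (-1:ℤ) ((n:ℤ) - 1),
            c j x * (Real.exp (-t * ρ) * t ^ j))
          + ∫ t in Ioi T, Real.exp (-t * ρ) *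
            (a x t - ∑ j ∈ Finset.Icc (-1:ℤ) ((n:ℤ) - 1), c j x * t ^ j) := by
      rw [← integral_add (hsum_int x) (hrem_int x)]
      refine setIntegral_congr_fun measurableSet_Ioi (fun t ht => ?_)
      rw [Finset.sum_congr rfl (fun j (_ : j ∈ Finset.Icc (-1:ℤ) ((n:ℤ) - 1)) =>
        (by ring : c j x * (Real.exp (-t * ρ) * t ^ j) = Real.exp (-t * ρ) * (c j x * t ^ j))),
        ← Finset.mul_sum]
      ring
    have h3 : (∫ t in Ioi T, ∑ j ∈ Finset.Icc (-1:ℤ) ((n:ℤ) - 1),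
          c j x * (Real.exp (-t * ρ) * t ^ j))
        = ∑ j ∈ Finset.Icc (-1:ℤ) ((n:ℤ) - 1), c j x * I j := by
      rw [integral_finset_sum _ (fun j hj =>
        (aux_intOn_exp_zpow hρ hT (Finset.mem_Icc.1 hj).1).const_mul _)]
      exact Finset.sum_congr rfl (fun j _ => integral_const_mul _ _)
    rw [← hsplit, h2, h3]
    ring
  -- integrability in x
  have hF_int : Integrable (fun x => ∫ t in Ioi (0:ℝ), Real.exp (-t * ρ) * a x t) μ :=
    (hint ρ hρ).integral_prod_left
  have hh_int : Integrable (fun x => ∑ j ∈ Finset.Icc (-1:ℤ) ((n:ℤ) - 1), c j x * I j) μ :=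
    integrable_finset_sum _ (fun j _ => (hc j).mul_const _)
  -- bound on the O(1) part
  have hARbound : ∀ x : X,
      |(∫ t in Ioi (0:ℝ), Real.exp (-t * ρ) * a x t)
        - ∑ j ∈ Finset.Icc (-1:ℤ) ((n:ℤ) - 1), c j x * I j| ≤ K1 := by
    intro x
    rw [hFx x, add_sub_cancel_right]
    have hA : |∫ t in Ioc (0:ℝ) T, Real.exp (-t * ρ) * a x t| ≤ Ma * T := by
      have hbnd := norm_setIntegral_le_of_norm_le_const (μ := volume) (s := Ioc (0:ℝ) T)
        (C := Ma) (f := fun t => Real.exp (-t * ρ) * a x t) measure_Ioc_lt_top ?_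
      · rwa [Real.norm_eq_abs, Real.volume_real_Ioc_of_le hT.le,
          sub_zero] at hbnd
      · intro t ht
        rw [Real.norm_eq_abs, abs_mul, abs_of_pos (Real.exp_pos _)]
        have he1 : Real.exp (-t * ρ) ≤ 1 :=
          Real.exp_le_one_iff.2 (by nlinarith [ht.1.le, hρ.le])
        calc Real.exp (-t * ρ) * |a x t| ≤ 1 * Ma :=
              mul_le_mul he1 (hMa x t ⟨ht.1.le, ht.2⟩) (abs_nonneg _) zero_le_one
          _ = Ma := one_mul _
    have hR : |∫ t in Ioi T, Real.exp (-t * ρ) *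
        (a x t - ∑ j ∈ Finset.Icc (-1:ℤ) ((n:ℤ) - 1), c j x * t ^ j)| ≤ C * T⁻¹ := by
      have hbnd := norm_integral_le_of_norm_le (μ := volume.restrict (Ioi T))
        (f := fun t => Real.exp (-t * ρ) *
          (a x t - ∑ j ∈ Finset.Icc (-1:ℤ) ((n:ℤ) - 1), c j x * t ^ j))
        (g := fun t => C * t ^ (-(1:ℝ) - 1))
        ((integrableOn_Ioi_rpow_of_lt (by norm_num : (-(1:ℝ) - 1) < -1) hT).const_mul C) ?_
      · have hval : ∫ t in Ioi T, C * t ^ (-(1:ℝ) - 1) = C * T⁻¹ := by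
          rw [integral_const_mul, integral_Ioi_rpow_of_lt (by norm_num) hT,
            show (-(1:ℝ) - 1) + 1 = -1 by norm_num, Real.rpow_neg_one]
          ring
        rw [Real.norm_eq_abs] at hbnd
        rw [← hval]
        exact hbnd
      · rw [ae_restrict_iff' measurableSet_Ioi]
        filter_upwards with t ht
        have ht0 : 0 < t := hT.trans ht
        rw [Real.norm_eq_abs, abs_mul, abs_of_pos (Real.exp_pos _)]
        have he1 : Real.exp (-t * ρ) ≤ 1 :=
          Real.exp_le_one_iff.2 (by nlinarith [ht0.le, hρ.le])
        calc Real.exp (-t * ρ) * |a x t - ∑ j ∈ Finset.Icc (-1:ℤ) ((n:ℤ) - 1), c j x * t ^ j|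
            ≤ 1 * (C * t ^ (-(1:ℝ) - 1)) :=
              mul_le_mul he1 (hb x t ht.le) (abs_nonneg _) (by positivity)
          _ = C * t ^ (-(1:ℝ) - 1) := one_mul _
    calc |(∫ t in Ioc (0:ℝ) T, Real.exp (-t * ρ) * a x t)
          + ∫ t in Ioi T, Real.exp (-t * ρ) *
            (a x t - ∑ j ∈ Finset.Icc (-1:ℤ) ((n:ℤ) - 1), c j x * t ^ j)|
        ≤ |∫ t in Ioc (0:ℝ) T, Real.exp (-t * ρ) * a x t|
          + |∫ t in Ioi T, Real.exp (-t * ρ) *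
            (a x t - ∑ j ∈ Finset.Icc (-1:ℤ) ((n:ℤ) - 1), c j x * t ^ j)| := abs_add_le _ _
      _ ≤ Ma * T + C * T⁻¹ := add_le_add hA hR
  -- I - J bounds
  have hIJ : ∀ j ∈ Finset.Icc (-1:ℤ) ((n:ℤ) - 1), |I j - J j| ≤ Kbig := by
    intro j hj
    obtain ⟨hj1, hj2⟩ := Finset.mem_Icc.1 hj
    have hlogT : (0:ℝ) ≤ 3 + |Real.log T| := by positivity
    have hpowpos : (0:ℝ) ≤ (max 1 T) ^ n * T :=
      mul_nonneg (pow_nonneg (le_trans zero_le_one (le_max_left 1 T)) n) hT.le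
    rcases eq_or_lt_of_le hj1 with h | h
    · subst h
      have hJm1 : J (-1) = -Real.log ρ := by rw [hJdef]; norm_num
      rw [hJm1, hIdef]
      refine le_trans (aux_log_tail hT hρ hρT) ?_
      rw [hKbigdef]
      linarith [hpowpos]
    · obtain ⟨k, rfl⟩ := Int.eq_ofNat_of_zero_le (by omega : (0:ℤ) ≤ j)
      have hIk : I (k:ℤ) = ∫ t in Ioi T, Real.exp (-t * ρ) * t ^ k := by
        rw [hIdef]
        exact setIntegral_congr_fun measurableSet_Ioi (fun t _ => by rw [zpow_natCast])
      have hJk : J (k:ℤ) = (Nat.factorial k : ℝ) * ρ ^ (-(k:ℤ) - 1) := by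
        rw [hJdef]
        simp only [if_neg (by omega : (k:ℤ) ≠ -1), Int.toNat_natCast]
      rw [hIk, hJk]
      refine (aux_pow_tail hT hρ k).trans ?_
      rw [hKbigdef]
      have h1 : (max 1 T) ^ k ≤ (max 1 T) ^ n :=
        pow_le_pow_right₀ (le_max_left 1 T) (by omega)
      nlinarith [hT.le, hlogT]
  -- rewriting the main term
  have hMain : (∑ j ∈ Finset.range n,
        ((Nat.factorial (n - 1 - j) : ℝ) * ∫ x, c ((n:ℤ) - 1 - j) x ∂μ) * ρ ^ ((j:ℤ) - n))
      + (-(∫ x, c (-1) x ∂μ)) * Real.log ρ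
      = ∑ j ∈ Finset.Icc (-1:ℤ) ((n:ℤ) - 1), (∫ x, c j x ∂μ) * J j := by
    have hIcc : Finset.Icc (-1:ℤ) ((n:ℤ) - 1)
        = insert (-1:ℤ) (Finset.Icc 0 ((n:ℤ) - 1)) := by
      ext k
      simp only [Finset.mem_Icc, Finset.mem_insert]
      omega
    rw [hIcc, Finset.sum_insert (by simp)]
    have h1 : (∫ x, c (-1:ℤ) x ∂μ) * J (-1) = (-(∫ x, c (-1) x ∂μ)) * Real.log ρ := by
      have : J (-1) = -Real.log ρ := by rw [hJdef]; norm_num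
      rw [this]; ring
    have h2 : ∑ j ∈ Finset.range n,
        ((Nat.factorial (n - 1 - j) : ℝ) * ∫ x, c ((n:ℤ) - 1 - j) x ∂μ) * ρ ^ ((j:ℤ) - n)
        = ∑ j ∈ Finset.Icc (0:ℤ) ((n:ℤ) - 1), (∫ x, c j x ∂μ) * J j := by
      refine Finset.sum_nbij' (fun j => (n:ℤ) - 1 - j) (fun k => ((n:ℤ) - 1 - k).toNat)
        ?_ ?_ ?_ ?_ ?_
      · intro j hj
        rw [Finset.mem_range] at hj
        show ((n:ℤ) - 1 - j) ∈ Finset.Icc (0:ℤ) ((n:ℤ) - 1)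
        rw [Finset.mem_Icc]
        omega
      · intro k hk
        rw [Finset.mem_Icc] at hk
        show ((n:ℤ) - 1 - k).toNat ∈ Finset.range n
        rw [Finset.mem_range]
        omega
      · intro j hj
        rw [Finset.mem_range] at hj
        show ((n:ℤ) - 1 - (((n:ℤ) - 1 - j))).toNat = j
        omega
      · intro k hk
        rw [Finset.mem_Icc] at hk
        show (n:ℤ) - 1 - ((((n:ℤ) - 1 - k)).toNat : ℤ) = k
        omega
      · intro j hj
        rw [Finset.mem_range] at hj
        show ((Nat.factorial (n - 1 - j) : ℝ) * ∫ x, c ((n:ℤ) - 1 - j) x ∂μ) * ρ ^ ((j:ℤ) - n)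
          = (∫ x, c ((n:ℤ) - 1 - j) x ∂μ) * J ((n:ℤ) - 1 - j)
        have hne : (n:ℤ) - 1 - j ≠ -1 := by omega
        have hJv : J ((n:ℤ) - 1 - j)
            = (Nat.factorial (((n:ℤ) - 1 - j).toNat) : ℝ) * ρ ^ (-((n:ℤ) - 1 - j) - 1) := by
          rw [hJdef]; simp only [if_neg hne]
        have htn : ((n:ℤ) - 1 - j).toNat = n - 1 - j := by omega
        have hexp2 : -((n:ℤ) - 1 - j) - 1 = (j:ℤ) - n := by ring
        rw [hJv, htn, hexp2]
        ring
    rw [h1, h2]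
    ring
  -- final assembly
  have hsum_eq : ∫ x, (∑ j ∈ Finset.Icc (-1:ℤ) ((n:ℤ) - 1), c j x * I j) ∂μ
      = ∑ j ∈ Finset.Icc (-1:ℤ) ((n:ℤ) - 1), (∫ x, c j x ∂μ) * I j := by
    rw [integral_finset_sum _ (fun j _ => (hc j).mul_const _)]
    exact Finset.sum_congr rfl (fun j _ => integral_mul_const _ _)
  have hkey : (∫ x, (∫ t in Ioi (0:ℝ), Real.exp (-t * ρ) * a x t) ∂μ)
      - ((∑ j ∈ Finset.range n,
          ((Nat.factorial (n - 1 - j) : ℝ) * ∫ x, c ((n:ℤ) - 1 - j) x ∂μ) * ρ ^ ((j:ℤ) - n))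
        + (-(∫ x, c (-1) x ∂μ)) * Real.log ρ)
      = (∫ x, ((∫ t in Ioi (0:ℝ), Real.exp (-t * ρ) * a x t)
          - ∑ j ∈ Finset.Icc (-1:ℤ) ((n:ℤ) - 1), c j x * I j) ∂μ)
        + ∑ j ∈ Finset.Icc (-1:ℤ) ((n:ℤ) - 1), (∫ x, c j x ∂μ) * (I j - J j) := by
    rw [integral_sub hF_int hh_int, hsum_eq, hMain]
    rw [Finset.sum_congr rfl (fun j (_ : j ∈ Finset.Icc (-1:ℤ) ((n:ℤ) - 1)) =>
      mul_sub (∫ x, c j x ∂μ) (I j) (J j)), Finset.sum_sub_distrib]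
    ring
  rw [hkey]
  calc |(∫ x, ((∫ t in Ioi (0:ℝ), Real.exp (-t * ρ) * a x t)
          - ∑ j ∈ Finset.Icc (-1:ℤ) ((n:ℤ) - 1), c j x * I j) ∂μ)
        + ∑ j ∈ Finset.Icc (-1:ℤ) ((n:ℤ) - 1), (∫ x, c j x ∂μ) * (I j - J j)|
      ≤ |∫ x, ((∫ t in Ioi (0:ℝ), Real.exp (-t * ρ) * a x t)
          - ∑ j ∈ Finset.Icc (-1:ℤ) ((n:ℤ) - 1), c j x * I j) ∂μ|
        + |∑ j ∈ Finset.Icc (-1:ℤ) ((n:ℤ) - 1), (∫ x, c j x ∂μ) * (I j - J j)| := abs_add_le _ _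
    _ ≤ K1 * (μ univ).toReal
        + ∑ j ∈ Finset.Icc (-1:ℤ) ((n:ℤ) - 1), |∫ x, c j x ∂μ| * Kbig := by
        refine add_le_add ?_ ?_
        · have := norm_integral_le_of_norm_le_const (μ := μ) (C := K1)
            (f := fun x => (∫ t in Ioi (0:ℝ), Real.exp (-t * ρ) * a x t)
              - ∑ j ∈ Finset.Icc (-1:ℤ) ((n:ℤ) - 1), c j x * I j)
            (Filter.Eventually.of_forall (fun x => by rw [Real.norm_eq_abs]; exact hARbound x))
          rwa [Real.norm_eq_abs] at this
        · refine (Finset.abs_sum_le_sum_abs _ _).trans ?_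
          refine Finset.sum_le_sum (fun j hj => ?_)
          rw [abs_mul]
          exact mul_le_mul_of_nonneg_left (hIJ j hj) (abs_nonneg _)
end

section
/- Suppose A(ε,t) = φ(ε,t)ε^{-n} + ψ(ε,t) log ε with φ, ψ real analytic in (ε,t) near (0,t₀), and suppose ∂_t A(ε,t) = ε·u(ε,t) where u is again of the form φ₁(ε,t)ε^{-n} + ψ₁(ε,t) log ε with φ₁, ψ₁ real analytic. Then ∂_t ψ(0,t) = 0, i.e., the coefficient of ε⁰ log ε in A is independent of t. -/
open Real Set Filter

private lemma log_aux19 {h g : ℝ → ℝ} (hh : ContinuousAt h 0) (hg : ContinuousAt g 0)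
    (heq : ∀ᶠ ε in nhdsWithin (0:ℝ) (Set.Ioi 0), h ε = g ε * Real.log ε) : g 0 = 0 := by
  have hlog : Tendsto Real.log (nhdsWithin (0:ℝ) (Set.Ioi 0)) atBot :=
    Real.tendsto_log_nhdsGT_zero
  have hinv : Tendsto (fun ε => (Real.log ε)⁻¹) (nhdsWithin (0:ℝ) (Set.Ioi 0)) (nhds 0) := by
    have h1 : Tendsto (fun ε => -Real.log ε) (nhdsWithin (0:ℝ) (Set.Ioi 0)) atTop :=
      tendsto_neg_atBot_atTop.comp hlog
    have h2 := h1.inv_tendsto_atTop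
    have h3 := h2.neg
    rw [neg_zero] at h3
    exact h3.congr fun ε => by simp [Pi.inv_apply, inv_neg]
  have h1 : Tendsto g (nhdsWithin (0:ℝ) (Set.Ioi 0)) (nhds (h 0 * 0)) := by
    refine Tendsto.congr' ?_ ((hh.tendsto.mono_left nhdsWithin_le_nhds).mul hinv)
    filter_upwards [heq, Ioo_mem_nhdsGT_of_mem (by constructor <;> norm_num : (0:ℝ) ∈ Set.Ico (0:ℝ) 1)]
      with ε hε hε'
    have hlogne : Real.log ε ≠ 0 := ne_of_lt (Real.log_neg hε'.1 hε'.2)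
    rw [hε]
    field_simp
  have h2 : Tendsto g (nhdsWithin (0:ℝ) (Set.Ioi 0)) (nhds (g 0)) :=
    hg.tendsto.mono_left nhdsWithin_le_nhds
  have := tendsto_nhds_unique h2 h1
  simpa using this

private lemma div_aux19 {h : ℝ → ℝ} (hh : AnalyticAt ℝ h 0) (h0 : h 0 = 0) :
    ∃ h' : ℝ → ℝ, AnalyticAt ℝ h' 0 ∧ ∀ ε : ℝ, ε ≠ 0 → h ε = ε * h' ε := by
  obtain ⟨p, hp⟩ := hh
  refine ⟨dslope h 0, (hp.has_fpower_series_dslope_fslope).analyticAt, fun ε hε => ?_⟩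
  rw [dslope_of_ne _ hε, slope_def_field, h0]
  field_simp
  ring

private lemma key19 : ∀ (n : ℕ) {h g : ℝ → ℝ}, AnalyticAt ℝ h 0 → AnalyticAt ℝ g 0 →
    (∀ᶠ ε in nhdsWithin (0:ℝ) (Set.Ioi 0), h ε = ε ^ n * g ε * Real.log ε) → g 0 = 0 := by
  intro n
  induction n with
  | zero =>
    intro h g hh hg heq
    exact log_aux19 hh.continuousAt hg.continuousAt (by simpa using heq)
  | succ n ih =>
    intro h g hh hg heq
    have h0 : h 0 = 0 := by
      have t1 : Tendsto (fun ε : ℝ => ε ^ (n+1) * g ε * Real.log ε)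
          (nhdsWithin (0:ℝ) (Set.Ioi 0)) (nhds 0) := by
        have ha : Tendsto (fun ε : ℝ => ε ^ n * g ε) (nhdsWithin (0:ℝ) (Set.Ioi 0))
            (nhds ((0:ℝ) ^ n * g 0)) :=
          ((continuousAt_pow 0 n).tendsto.mul hg.continuousAt.tendsto).mono_left
            nhdsWithin_le_nhds
        have hb : Tendsto (fun ε : ℝ => Real.log ε * ε) (nhdsWithin (0:ℝ) (Set.Ioi 0)) (nhds 0) := by
          have := tendsto_log_mul_rpow_nhdsGT_zero (r := 1) one_pos
          refine this.congr' ?_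
          filter_upwards [self_mem_nhdsWithin] with ε hε
          rw [Real.rpow_one]
        have := ha.mul hb
        rw [mul_zero] at this
        refine this.congr ?_
        intro ε
        ring
      have t2 : Tendsto h (nhdsWithin (0:ℝ) (Set.Ioi 0)) (nhds (h 0)) :=
        hh.continuousAt.tendsto.mono_left nhdsWithin_le_nhds
      exact tendsto_nhds_unique (t2.congr' heq) t1
    obtain ⟨h', hh', hdiv⟩ := div_aux19 hh h0
    refine ih hh' hg ?_
    filter_upwards [heq, self_mem_nhdsWithin] with ε hε hεpos
    have hne : (ε:ℝ) ≠ 0 := ne_of_gt hεpos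
    have : ε * h' ε = ε * (ε ^ n * g ε * Real.log ε) := by
      rw [← hdiv ε hne, hε]; ring
    exact mul_left_cancel₀ hne this

/-- If `A(ε,t) = φ(ε,t) ε^{-n} + ψ(ε,t) log ε` with `φ, ψ` real analytic near
`(0,t₀)` and `∂_t A(ε,t) = ε · (φ₁(ε,t) ε^{-n} + ψ₁(ε,t) log ε)` with `φ₁, ψ₁`
real analytic, then `∂_t ψ(0,t) = 0`: the coefficient of `ε⁰ log ε` in `A` is
independent of `t`. -/
theorem stmt_19 (n : ℕ) (t₀ : ℝ) (φ ψ φ₁ ψ₁ : ℝ × ℝ → ℝ)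
    (hφ : AnalyticAt ℝ φ (0, t₀)) (hψ : AnalyticAt ℝ ψ (0, t₀))
    (hφ₁ : AnalyticAt ℝ φ₁ (0, t₀)) (hψ₁ : AnalyticAt ℝ ψ₁ (0, t₀))
    (hvar : ∀ᶠ p : ℝ × ℝ in nhds (0, t₀), 0 < p.1 →
      HasDerivAt (fun t => φ (p.1, t) * p.1 ^ (-(n:ℤ)) + ψ (p.1, t) * Real.log p.1)
        (p.1 * (φ₁ p * p.1 ^ (-(n:ℤ)) + ψ₁ p * Real.log p.1)) p.2) :
    ∀ᶠ t in nhds t₀, deriv (fun s => ψ (0, s)) t = 0 := by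
  have hDψ : AnalyticAt ℝ (fun p : ℝ × ℝ => fderiv ℝ ψ p (((0:ℝ),(1:ℝ)) : ℝ × ℝ)) (0, t₀) :=
    ((ContinuousLinearMap.apply ℝ ℝ (((0:ℝ),(1:ℝ)) : ℝ × ℝ)).analyticAt _).comp hψ.fderiv
  have hDφ : AnalyticAt ℝ (fun p : ℝ × ℝ => fderiv ℝ φ p (((0:ℝ),(1:ℝ)) : ℝ × ℝ)) (0, t₀) :=
    ((ContinuousLinearMap.apply ℝ ℝ (((0:ℝ),(1:ℝ)) : ℝ × ℝ)).analyticAt _).comp hφ.fderiv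
  set G : ℝ × ℝ → ℝ := fun p => fderiv ℝ ψ p (((0:ℝ),(1:ℝ)) : ℝ × ℝ) - p.1 * ψ₁ p with hGdef
  set H : ℝ × ℝ → ℝ := fun p => p.1 * φ₁ p - fderiv ℝ φ p (((0:ℝ),(1:ℝ)) : ℝ × ℝ) with hHdef
  have hGa : AnalyticAt ℝ G (0, t₀) := hDψ.sub (analyticAt_fst.mul hψ₁)
  have hHa : AnalyticAt ℝ H (0, t₀) := (analyticAt_fst.mul hφ₁).sub hDφ
  -- the key pointwise identity
  have heqkey : ∀ᶠ p : ℝ × ℝ in nhds (0, t₀), 0 < p.1 →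
      H p = p.1 ^ n * G p * Real.log p.1 := by
    filter_upwards [hvar, hφ.eventually_analyticAt, hψ.eventually_analyticAt]
      with p h1 hφp hψp
    intro hpos
    have hcurve : HasDerivAt (fun s : ℝ => ((p.1, s) : ℝ × ℝ)) (((0:ℝ),(1:ℝ)) : ℝ × ℝ) p.2 :=
      (hasDerivAt_const p.2 p.1).prodMk (hasDerivAt_id p.2)
    have hφd : HasDerivAt (fun s => φ (p.1, s)) (fderiv ℝ φ p (((0:ℝ),(1:ℝ)) : ℝ × ℝ)) p.2 := by
      have h2 : HasFDerivAt φ (fderiv ℝ φ p) ((fun s : ℝ => ((p.1, s) : ℝ × ℝ)) p.2) := by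
        simpa using hφp.differentiableAt.hasFDerivAt
      exact h2.comp_hasDerivAt p.2 hcurve
    have hψd : HasDerivAt (fun s => ψ (p.1, s)) (fderiv ℝ ψ p (((0:ℝ),(1:ℝ)) : ℝ × ℝ)) p.2 := by
      have h2 : HasFDerivAt ψ (fderiv ℝ ψ p) ((fun s : ℝ => ((p.1, s) : ℝ × ℝ)) p.2) := by
        simpa using hψp.differentiableAt.hasFDerivAt
      exact h2.comp_hasDerivAt p.2 hcurve
    have hcomb : HasDerivAt
        (fun t => φ (p.1, t) * p.1 ^ (-(n:ℤ)) + ψ (p.1, t) * Real.log p.1)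
        (fderiv ℝ φ p (((0:ℝ),(1:ℝ)) : ℝ × ℝ) * p.1 ^ (-(n:ℤ)) +
          fderiv ℝ ψ p (((0:ℝ),(1:ℝ)) : ℝ × ℝ) * Real.log p.1) p.2 :=
      (hφd.mul_const _).add (hψd.mul_const _)
    have heq := hcomb.unique (h1 hpos)
    have hne : p.1 ≠ 0 := ne_of_gt hpos
    have hpowne : p.1 ^ n ≠ 0 := pow_ne_zero _ hne
    rw [zpow_neg, zpow_natCast] at heq
    simp only [hHdef, hGdef]
    field_simp at heq
    linear_combination -heq
  -- slice the statements along t ↦ (0, t)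
  have hm : Tendsto (fun t : ℝ => ((0:ℝ), t)) (nhds t₀) (nhds ((0:ℝ), t₀)) :=
    ((continuous_const.prodMk continuous_id).tendsto t₀)
  have hGslice := hm.eventually hGa.eventually_analyticAt
  have hHslice := hm.eventually hHa.eventually_analyticAt
  have hψslice := hm.eventually hψ.eventually_analyticAt
  rw [nhds_prod_eq] at heqkey
  obtain ⟨u, hu, v, hv, huv⟩ := Filter.mem_prod_iff.mp heqkey
  have hslice : ∀ᶠ t in nhds t₀, ∀ᶠ ε in nhdsWithin (0:ℝ) (Set.Ioi 0),
      H (ε, t) = ε ^ n * G (ε, t) * Real.log ε := by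
    filter_upwards [hv] with t ht
    have hu' : ∀ᶠ ε in nhdsWithin (0:ℝ) (Set.Ioi 0), ε ∈ u := nhdsWithin_le_nhds hu
    filter_upwards [hu', self_mem_nhdsWithin] with ε hεu hεpos
    exact huv (Set.mk_mem_prod hεu ht) hεpos
  filter_upwards [hGslice, hHslice, hψslice, hslice] with t hGt hHt hψt heqt
  have hHcomp : AnalyticAt ℝ (fun ε : ℝ => H (ε, t)) 0 := hHt.comp₂ analyticAt_id analyticAt_const
  have hGcomp : AnalyticAt ℝ (fun ε : ℝ => G (ε, t)) 0 := hGt.comp₂ analyticAt_id analyticAt_const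
  have hg0 : G (0, t) = 0 := key19 n hHcomp hGcomp heqt
  have hDψ0 : fderiv ℝ ψ ((0:ℝ), t) (((0:ℝ),(1:ℝ)) : ℝ × ℝ) = 0 := by
    have := hg0
    simp only [hGdef, zero_mul, sub_zero] at this
    exact this
  have hψd : HasDerivAt (fun s => ψ (0, s)) (fderiv ℝ ψ ((0:ℝ), t) (((0:ℝ),(1:ℝ)) : ℝ × ℝ)) t := by
    have hcurve : HasDerivAt (fun s : ℝ => (((0:ℝ), s) : ℝ × ℝ)) (((0:ℝ),(1:ℝ)) : ℝ × ℝ) t :=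
      (hasDerivAt_const t (0:ℝ)).prodMk (hasDerivAt_id t)
    have h2 : HasFDerivAt ψ (fderiv ℝ ψ ((0:ℝ), t)) ((fun s : ℝ => (((0:ℝ), s) : ℝ × ℝ)) t) :=
      hψt.differentiableAt.hasFDerivAt
    exact h2.comp_hasDerivAt t hcurve
  rw [hψd.deriv, hDψ0]
end
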